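/- Let p, b, q ∈ ℂ. For j ≥ 1 set β_j = −j((j+1)/2 · b + (j−1)/2 · p + q) and γ_j = j! (q−p) ((−p−b)/2)^{j−1}, and set γ₀ = 1. Then for every n ≥ 1 and every ℓ ∈ {0, 1, …, n−1}: ∑_{j=n−ℓ}^{n} [(−1)^j γ_j / (n−j)!] · ∏_{i=j+1}^{n} β_i = [n (−1)^{n−ℓ} / (ℓ! (n−ℓ))] · γ_{n−ℓ} · ∏_{i=n−ℓ}^{n−1} β_i. -/

import Mathlib

set_option maxHeartbeats 2000000


open Finset

/-- `β_j = −j((j+1)/2 · b + (j−1)/2 · p + q)`. -/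
noncomputable def β (p b q : ℂ) (j : ℕ) : ℂ :=
  -(j : ℂ) * (((j : ℂ) + 1) / 2 * b + ((j : ℂ) - 1) / 2 * p + q)

/-- `γ_j = j! (q−p) ((−p−b)/2)^{j−1}` for `j ≥ 1`, with `γ₀ = 1`. -/
noncomputable def γ (p b q : ℂ) (j : ℕ) : ℂ :=
  if j = 0 then 1 else (Nat.factorial j : ℂ) * (q - p) * ((-p - b) / 2) ^ (j - 1)

private lemma aux_identity (N L F G d e s bb pp qq : ℂ) (hF : F ≠ 0) (hL : L + 1 ≠ 0)
    (h1 : N - L ≠ 0) (h2 : N - (L + 1) ≠ 0) :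
    (s * (G * d * e) / ((L + 1) * F)) * (-N * ((N + 1)/2 * bb + (N - 1)/2 * pp + qq))
      + (N * (-s) / (F * (N - L))) * ((N - L) * G * d * (((-pp - bb)/2) * e))
    = (N * s / ((L + 1) * F * (N - (L + 1)))) * (G * d * e) *
        (-(N - L - 1) * (((N - L - 1) + 1)/2 * bb + ((N - L - 1) - 1)/2 * pp + qq)) := by
  field_simp
  ring

/-- for every `n ≥ 1` and `ℓ ∈ {0,…,n−1}`,
`∑_{j=n−ℓ}^{n} (−1)^j γ_j/(n−j)! ∏_{i=j+1}^{n} β_i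
  = n(−1)^{n−ℓ}/(ℓ!(n−ℓ)) γ_{n−ℓ} ∏_{i=n−ℓ}^{n−1} β_i`. -/
theorem gamma_beta_sum (p b q : ℂ) (n ℓ : ℕ) (hn : 1 ≤ n) (hℓ : ℓ ≤ n - 1) :
    ∑ j ∈ Finset.Icc (n - ℓ) n,
        ((-1 : ℂ) ^ j * γ p b q j / (Nat.factorial (n - j) : ℂ)) *
          ∏ i ∈ Finset.Icc (j + 1) n, β p b q i
      = ((n : ℂ) * (-1 : ℂ) ^ (n - ℓ) / ((Nat.factorial ℓ : ℂ) * ((n : ℂ) - (ℓ : ℂ)))) *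
          γ p b q (n - ℓ) * ∏ i ∈ Finset.Icc (n - ℓ) (n - 1), β p b q i := by
  induction ℓ with
  | zero =>
    have hn0 : (n : ℂ) ≠ 0 := Nat.cast_ne_zero.mpr (by omega)
    simp only [Nat.sub_zero, Finset.Icc_self, Finset.sum_singleton, Nat.sub_self,
      Nat.factorial_zero, Nat.cast_one, Nat.cast_zero, sub_zero]
    rw [show Finset.Icc (n+1) n = ∅ by simp, show Finset.Icc n (n-1) = ∅ by
      apply Finset.Icc_eq_empty; omega]
    simp
    field_simp
    simp
  | succ ℓ ih =>
    have hn2 : ℓ + 2 ≤ n := by omega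
    have ih' := ih (by omega)
    set m := n - ℓ with hm
    have hm2 : 2 ≤ m := by omega
    have hsplit : Finset.Icc (n - (ℓ+1)) n = insert (m - 1) (Finset.Icc m n) := by
      ext x; simp only [Finset.mem_Icc, Finset.mem_insert]; omega
    have hnotmem : m - 1 ∉ Finset.Icc m n := by simp; omega
    rw [hsplit, Finset.sum_insert hnotmem, ih']
    have hprod1 : ∏ i ∈ Finset.Icc ((m-1)+1) n, β p b q i
        = β p b q n * ∏ i ∈ Finset.Icc m (n-1), β p b q i := by
      have he : Finset.Icc m n = insert n (Finset.Icc m (n-1)) := by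
        ext x; simp only [Finset.mem_Icc, Finset.mem_insert]; omega
      have h' : n ∉ Finset.Icc m (n-1) := by simp; omega
      rw [show (m-1)+1 = m from by omega, he, Finset.prod_insert h']
    have hprod2 : ∏ i ∈ Finset.Icc (n - (ℓ+1)) (n-1), β p b q i
        = β p b q (m-1) * ∏ i ∈ Finset.Icc m (n-1), β p b q i := by
      have he : Finset.Icc (n-(ℓ+1)) (n-1) = insert (m-1) (Finset.Icc m (n-1)) := by
        ext x; simp only [Finset.mem_Icc, Finset.mem_insert]; omega
      have h' : m - 1 ∉ Finset.Icc m (n-1) := by simp; omega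
      rw [he, Finset.prod_insert h']
    rw [hprod1, hprod2,
      show n - (m-1) = ℓ+1 from by omega,
      show n - (ℓ+1) = m-1 from by omega]
    have hfm : (Nat.factorial m : ℂ) = (m : ℂ) * (Nat.factorial (m-1) : ℂ) := by
      rw [show m = (m-1)+1 from by omega, Nat.factorial_succ]
      push_cast [show (m-1)+1 = m from by omega]
      ring
    have hpow : ((-p - b)/2 : ℂ) ^ (m-1) = ((-p-b)/2) * ((-p-b)/2) ^ (m-2) := by
      rw [show m - 1 = (m-2)+1 from by omega, pow_succ]; ring
    have hsgn : ((-1 : ℂ)) ^ m = -(-1 : ℂ) ^ (m-1) := by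
      have h := pow_succ (-1 : ℂ) (m-1)
      rw [show (m-1)+1 = m from by omega] at h
      rw [h]; ring
    have hcm : (m : ℂ) = (n : ℂ) - (ℓ : ℂ) := by
      rw [hm]; push_cast [Nat.cast_sub (by omega : ℓ ≤ n)]; ring
    have hcm1 : ((m - 1 : ℕ) : ℂ) = (n : ℂ) - (ℓ : ℂ) - 1 := by
      push_cast [Nat.cast_sub (by omega : 1 ≤ m)]; rw [hcm]
    have hne1 : ((n : ℂ) - (ℓ : ℂ)) ≠ 0 := by
      rw [← hcm]; exact Nat.cast_ne_zero.mpr (by omega)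
    have hne2 : ((n : ℂ) - (ℓ : ℂ) - 1) ≠ 0 := by
      rw [← hcm1]; exact Nat.cast_ne_zero.mpr (by omega)
    have hfl : (Nat.factorial ℓ : ℂ) ≠ 0 := Nat.cast_ne_zero.mpr (Nat.factorial_ne_zero ℓ)
    have hγm : γ p b q m
        = ((n:ℂ) - (ℓ:ℂ)) * (Nat.factorial (m-1) : ℂ) * (q - p) *
            (((-p-b)/2) * ((-p-b)/2)^(m-2)) := by
      simp only [γ, if_neg (show m ≠ 0 from by omega)]
      rw [hfm, hpow, hcm]
    have hγm1 : γ p b q (m-1)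
        = (Nat.factorial (m-1) : ℂ) * (q - p) * ((-p-b)/2)^(m-2) := by
      simp only [γ, if_neg (show m - 1 ≠ 0 from by omega)]
      rw [show m-1-1 = m-2 from by omega]
    have hβm1 : β p b q (m-1)
        = -((n:ℂ)-(ℓ:ℂ)-1) * ((((n:ℂ)-(ℓ:ℂ)-1)+1)/2*b + (((n:ℂ)-(ℓ:ℂ)-1)-1)/2*p + q) := by
      simp only [β, hcm1]
    have hfact : (Nat.factorial (ℓ+1) : ℂ) = ((ℓ:ℂ)+1) * (Nat.factorial ℓ : ℂ) := by
      rw [Nat.factorial_succ]; push_cast; ring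
    have hL1 : ((ℓ:ℂ)+1) ≠ 0 := Nat.cast_add_one_ne_zero ℓ
    have key : ((-1 : ℂ) ^ (m-1) * γ p b q (m-1) / (Nat.factorial (ℓ+1) : ℂ)) * β p b q n
        + ((n : ℂ) * (-1 : ℂ) ^ m / ((Nat.factorial ℓ : ℂ) * ((n : ℂ) - (ℓ : ℂ)))) * γ p b q m
        = ((n : ℂ) * (-1 : ℂ) ^ (m-1) / ((Nat.factorial (ℓ+1) : ℂ) * ((n : ℂ) - ((ℓ:ℂ)+1)))) *
            γ p b q (m-1) * β p b q (m-1) := by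
      have hne2' : ((n:ℂ) - ((ℓ:ℂ)+1)) ≠ 0 := by
        have h : (n:ℂ) - ((ℓ:ℂ)+1) = (n:ℂ) - (ℓ:ℂ) - 1 := by ring
        rw [h]; exact hne2
      rw [hγm, hγm1, hβm1, hfact, hsgn]
      simp only [β]
      exact aux_identity (n:ℂ) (ℓ:ℂ) (Nat.factorial ℓ : ℂ)
        (Nat.factorial (m-1) : ℂ) (q - p) (((-p - b)/2)^(m-2)) ((-1:ℂ)^(m-1)) b p q
        hfl hL1 hne1 hne2'
    push_cast
    push_cast at key
    linear_combination (∏ i ∈ Finset.Icc m (n-1), β p b q i) * key
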